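/- Let w : ℕ → (0,∞) with w(0)=1 satisfy either (a) w(k) = k + v(k) with v(k) = o(k) and ∑_{k≥1} v(k)/k² convergent, or (b) w(k) = k^α + v(k) with 0 < α < 1 and v(k) = o(k^α). Then there exists a unique λ* > 0 such that ∑_{k=1}^∞ ∏_{j=0}^{k−1} w(j)/(λ* + w(j)) = 1; moreover in case (a) one has λ* > 1. (Uniqueness holds because λ ↦ ∑_{k=1}^∞ ∏_{j=0}^{k−1} w(j)/(λ+w(j)) is strictly decreasing on the set where it is finite and tends to 0 as λ → ∞.) -/

import Mathlib

open Filter Asymptotics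

namespace Statement4Aux

noncomputable def P (w : ℕ → ℝ) (lam : ℝ) (k : ℕ) : ℝ :=
  ∏ j ∈ Finset.range (k + 1), w j / (lam + w j)

lemma P_def (w : ℕ → ℝ) (lam : ℝ) (k : ℕ) :
    ∏ j ∈ Finset.range (k + 1), w j / (lam + w j) = P w lam k := rfl

variable {w : ℕ → ℝ}

lemma factor_pos (hw : ∀ k, 0 < w k) {lam : ℝ} (hl : 0 ≤ lam) (j : ℕ) :
    0 < w j / (lam + w j) :=
  div_pos (hw j) (by linarith [hw j])

lemma P_pos (hw : ∀ k, 0 < w k) {lam : ℝ} (hl : 0 ≤ lam) (k : ℕ) : 0 < P w lam k :=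
  Finset.prod_pos fun j _ => factor_pos hw hl j

lemma P_anti (hw : ∀ k, 0 < w k) {l1 l2 : ℝ} (h1 : 0 ≤ l1) (h12 : l1 ≤ l2) (k : ℕ) :
    P w l2 k ≤ P w l1 k := by
  apply Finset.prod_le_prod (fun j _ => (factor_pos hw (h1.trans h12) j).le)
  intro j _
  gcongr
  · exact (hw j).le
  · linarith [hw j]

lemma P_strict_anti (hw : ∀ k, 0 < w k) {l1 l2 : ℝ} (h1 : 0 ≤ l1) (h12 : l1 < l2) (k : ℕ) :
    P w l2 k < P w l1 k := by
  apply Finset.prod_lt_prod_of_nonempty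
  · intro j _; exact factor_pos hw (by linarith) j
  · intro j _
    apply div_lt_div_of_pos_left (hw j) (by linarith [hw j]) (by linarith)
  · exact Finset.nonempty_range_iff.mpr (Nat.succ_ne_zero k)

lemma P_contOn (hw : ∀ k, 0 < w k) (k : ℕ) {s : Set ℝ} (hs : ∀ x ∈ s, 0 ≤ x) :
    ContinuousOn (fun lam => P w lam k) s := by
  apply continuousOn_finset_prod
  intro j _
  exact ContinuousOn.div continuousOn_const (continuousOn_id.add continuousOn_const)
    (fun x hx => by have := hs x hx; have := hw j; positivity)

lemma exp_le_P (hw : ∀ k, 0 < w k) {lam : ℝ} (hl : 0 ≤ lam) (k : ℕ) :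
    Real.exp (-∑ j ∈ Finset.range (k + 1), lam / w j) ≤ P w lam k := by
  rw [← Finset.sum_neg_distrib, Real.exp_sum]
  apply Finset.prod_le_prod (fun j _ => (Real.exp_pos _).le)
  intro j _
  rw [Real.exp_neg, inv_eq_one_div, div_le_div_iff₀ (Real.exp_pos _) (by linarith [hw j])]
  have h := Real.add_one_le_exp (lam / w j)
  calc 1 * (lam + w j) = w j * (lam / w j + 1) := by
        have hne : w j ≠ 0 := (hw j).ne'
        field_simp
    _ ≤ w j * Real.exp (lam / w j) := by
        exact mul_le_mul_of_nonneg_left h (hw j).le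

lemma P_le_exp (hw : ∀ k, 0 < w k) {lam : ℝ} (hl : 0 ≤ lam) (k : ℕ) :
    P w lam k ≤ Real.exp (-∑ j ∈ Finset.range (k + 1), lam / (lam + w j)) := by
  rw [← Finset.sum_neg_distrib, Real.exp_sum]
  apply Finset.prod_le_prod (fun j _ => (factor_pos hw hl j).le)
  intro j _
  have h := Real.add_one_le_exp (-(lam / (lam + w j)))
  have hpos : 0 < lam + w j := by linarith [hw j]
  have : w j / (lam + w j) = -(lam / (lam + w j)) + 1 := by field_simp; ring
  rw [this]; exact h

lemma P_le_exp' (hw : ∀ k, 0 < w k) {lam : ℝ} (hl : 0 ≤ lam) (k : ℕ) :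
    P w lam k ≤ Real.exp (lam ^ 2 * ∑ j ∈ Finset.range (k + 1), 1 / w j ^ 2
      - lam * ∑ j ∈ Finset.range (k + 1), 1 / w j) := by
  refine (P_le_exp hw hl k).trans (Real.exp_le_exp.mpr ?_)
  rw [Finset.mul_sum, Finset.mul_sum, ← Finset.sum_sub_distrib, ← Finset.sum_neg_distrib]
  apply Finset.sum_le_sum
  intro j _
  have hb := hw j
  have hpos : 0 < lam + w j := by linarith
  have e1 : lam * (1 / w j) - lam ^ 2 * (1 / w j ^ 2) = (lam * w j - lam ^ 2) / w j ^ 2 := by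
    field_simp
  have key : lam * (1 / w j) - lam ^ 2 * (1 / w j ^ 2) ≤ lam / (lam + w j) := by
    rw [e1, div_le_div_iff₀ (by positivity) hpos]
    nlinarith [mul_nonneg (mul_nonneg hl hl) hl]
  linarith

lemma one_sub_inv_le_log {y : ℝ} (hy : 0 < y) : 1 - 1 / y ≤ Real.log y := by
  have h := Real.log_le_sub_one_of_pos (show (0:ℝ) < 1 / y by positivity)
  rw [one_div, Real.log_inv] at h
  have e := one_div y
  linarith [h, e.le, e.ge]

lemma log_le_sum_harmonic (k : ℕ) :
    Real.log ((k : ℝ) + 1) ≤ ∑ j ∈ Finset.range k, 1 / ((j : ℝ) + 1) := by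
  induction k with
  | zero => simp
  | succ n ih =>
    rw [Finset.sum_range_succ]
    have h2 : Real.log ((n : ℝ) + 1 + 1) - Real.log ((n : ℝ) + 1) ≤ 1 / ((n : ℝ) + 1) := by
      rw [← Real.log_div (by positivity) (by positivity)]
      have h3 := Real.log_le_sub_one_of_pos
        (show (0:ℝ) < ((n : ℝ) + 1 + 1) / ((n : ℝ) + 1) by positivity)
      have h4 : ((n : ℝ) + 1 + 1) / ((n : ℝ) + 1) - 1 = 1 / ((n : ℝ) + 1) := by
        field_simp
        ring
      linarith
    push_cast
    linarith

lemma sum_harmonic_le_log (k : ℕ) :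
    ∑ j ∈ Finset.range (k + 1), 1 / ((j : ℝ) + 1) ≤ Real.log ((k : ℝ) + 1) + 1 := by
  induction k with
  | zero => simp
  | succ n ih =>
    rw [Finset.sum_range_succ]
    have h2 : 1 / ((n : ℝ) + 1 + 1) ≤ Real.log ((n : ℝ) + 1 + 1) - Real.log ((n : ℝ) + 1) := by
      rw [← Real.log_div (by positivity) (by positivity)]
      have h3 := one_sub_inv_le_log
        (show (0:ℝ) < ((n : ℝ) + 1 + 1) / ((n : ℝ) + 1) by positivity)
      have h4 : 1 - 1 / (((n : ℝ) + 1 + 1) / ((n : ℝ) + 1)) = 1 / ((n : ℝ) + 1 + 1) := by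
        rw [one_div_div]
        field_simp
        ring
      linarith
    push_cast
    linarith

lemma summable_of_eventually_le {f g : ℕ → ℝ} (hf : ∀ k, 0 ≤ f k)
    (h : ∀ᶠ k in atTop, f k ≤ g k) (hg : Summable g) : Summable f := by
  obtain ⟨N, hN⟩ := eventually_atTop.1 h
  have h1 : Summable (fun k => f (k + N)) :=
    Summable.of_nonneg_of_le (fun k => hf _) (fun k => hN _ (Nat.le_add_left _ _))
      ((summable_nat_add_iff N).2 hg)
  exact (summable_nat_add_iff N).1 h1

lemma P_ratio (hw : ∀ k, 0 < w k) (hw0 : w 0 = 1) {l1 lam : ℝ} (h1 : 0 < l1)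
    (h : l1 ≤ lam) (k : ℕ) :
    P w lam k ≤ (1 + l1) / (1 + lam) * P w l1 k := by
  have e : ∀ l : ℝ, P w l k = (∏ j ∈ Finset.range k, w (j + 1) / (l + w (j + 1)))
      * (1 / (1 + l)) := by
    intro l
    rw [P, Finset.prod_range_succ', hw0]
    ring
  rw [e lam, e l1]
  have hprod : (∏ j ∈ Finset.range k, w (j + 1) / (lam + w (j + 1)))
      ≤ ∏ j ∈ Finset.range k, w (j + 1) / (l1 + w (j + 1)) := by
    apply Finset.prod_le_prod
    · intro j _; exact (factor_pos hw (by linarith) _).le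
    · intro j _
      gcongr
      · exact (hw _).le
      · linarith [hw (j + 1)]
  have hnn : (0:ℝ) ≤ ∏ j ∈ Finset.range k, w (j + 1) / (l1 + w (j + 1)) :=
    Finset.prod_nonneg fun j _ => (factor_pos hw h1.le _).le
  have heq : (1 + l1) / (1 + lam) * ((∏ j ∈ Finset.range k, w (j + 1) / (l1 + w (j + 1)))
      * (1 / (1 + l1))) = (∏ j ∈ Finset.range k, w (j + 1) / (l1 + w (j + 1)))
      * (1 / (1 + lam)) := by
    have hx1 : (1 + l1) ≠ 0 := by positivity
    have hx2 : (1 + lam) ≠ 0 := by nlinarith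
    have hsc : (1 + l1) / (1 + lam) * (1 / (1 + l1)) = 1 / (1 + lam) := by
      field_simp
    calc (1 + l1) / (1 + lam) * ((∏ j ∈ Finset.range k, w (j + 1) / (l1 + w (j + 1)))
          * (1 / (1 + l1)))
        = (∏ j ∈ Finset.range k, w (j + 1) / (l1 + w (j + 1)))
          * ((1 + l1) / (1 + lam) * (1 / (1 + l1))) := by ring
      _ = (∏ j ∈ Finset.range k, w (j + 1) / (l1 + w (j + 1))) * (1 / (1 + lam)) := by
          rw [hsc]
  rw [heq]
  have hl2 : (0:ℝ) < 1 + lam := by linarith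
  apply mul_le_mul_of_nonneg_right hprod (by positivity)

lemma tsum_ne_one_of_not_summable {f : ℕ → ℝ} (h : ¬ Summable f) :
    ∑' k, f k ≠ 1 := by
  rw [tsum_eq_zero_of_not_summable h]
  norm_num

lemma lam_unique (hw : ∀ k, 0 < w k) {l1 l2 : ℝ} (h1 : 0 < l1) (h2 : 0 < l2)
    (e1 : ∑' k, P w l1 k = 1) (e2 : ∑' k, P w l2 k = 1) : l1 = l2 := by
  rcases lt_trichotomy l1 l2 with hlt | heq | hgt
  · exfalso
    have hs1 : Summable (P w l1) := by
      by_contra hno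
      exact tsum_ne_one_of_not_summable hno e1
    have : ∑' k, P w l2 k < ∑' k, P w l1 k :=
      Summable.tsum_lt_tsum_of_nonneg (fun k => (P_pos hw h2.le k).le)
        (fun k => P_anti hw h1.le hlt.le k) (P_strict_anti hw h1.le hlt 0) hs1
    rw [e1, e2] at this
    exact lt_irrefl 1 this
  · exact heq
  · exfalso
    have hs2 : Summable (P w l2) := by
      by_contra hno
      exact tsum_ne_one_of_not_summable hno e2
    have : ∑' k, P w l1 k < ∑' k, P w l2 k :=
      Summable.tsum_lt_tsum_of_nonneg (fun k => (P_pos hw h1.le k).le)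
        (fun k => P_anti hw h2.le hgt.le k) (P_strict_anti hw h2.le hgt 0) hs2
    rw [e1, e2] at this
    exact lt_irrefl 1 this

lemma lam_gt (hw : ∀ k, 0 < w k) {c : ℝ} (hc : 0 ≤ c) (Hdiv : ¬ Summable (P w c))
    {lam : ℝ} (h0 : 0 < lam) (h1 : ∑' k, P w lam k = 1) : c < lam := by
  by_contra hcon
  push_neg at hcon
  have hns : ¬ Summable (P w lam) := by
    intro hs
    exact Hdiv (Summable.of_nonneg_of_le (fun k => (P_pos hw hc k).le)
      (fun k => P_anti hw h0.le hcon k) hs)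
  exact tsum_ne_one_of_not_summable hns h1

lemma master (hw : ∀ k, 0 < w k) (hw0 : w 0 = 1) {c : ℝ} (hc : 0 ≤ c)
    (Hsum : ∀ lam, c < lam → Summable (P w lam))
    (Hdiv : ¬ Summable (P w c)) :
    ∃ lam : ℝ, c < lam ∧ ∑' k, P w lam k = 1 := by
  have Hdiv' : Tendsto (fun n => ∑ k ∈ Finset.range n, P w c k) atTop atTop :=
    (not_summable_iff_tendsto_nat_atTop_of_nonneg (fun k => (P_pos hw hc k).le)).1 Hdiv
  obtain ⟨N, hN⟩ := (Hdiv'.eventually_gt_atTop 2).exists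
  -- find lam1 > c with partial sum > 1
  have hgc : ContinuousOn (fun lam => ∑ k ∈ Finset.range N, P w lam k) {x : ℝ | 0 ≤ x} :=
    continuousOn_finset_sum _ (fun k _ => P_contOn hw k (fun x hx => hx))
  have hcw : ContinuousWithinAt (fun lam => ∑ k ∈ Finset.range N, P w lam k)
      {x : ℝ | 0 ≤ x} c := hgc c hc
  have htend : Tendsto (fun lam => ∑ k ∈ Finset.range N, P w lam k)
      (nhdsWithin c (Set.Ioi c)) (nhds (∑ k ∈ Finset.range N, P w c k)) := by
    apply hcw.tendsto.mono_left
    apply nhdsWithin_mono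
    intro x hx
    exact le_of_lt (lt_of_le_of_lt hc hx)
  have hev : ∀ᶠ lam in nhdsWithin c (Set.Ioi c),
      1 < ∑ k ∈ Finset.range N, P w lam k :=
    htend.eventually (eventually_gt_nhds (by linarith))
  obtain ⟨l1, hl1gt, hl1c⟩ := (hev.and self_mem_nhdsWithin).exists
  have hl1pos : 0 < l1 := lt_of_le_of_lt hc hl1c
  have hs1 : Summable (P w l1) := Hsum l1 hl1c
  have hF1 : 1 < ∑' k, P w l1 k :=
    lt_of_lt_of_le hl1gt (Summable.sum_le_tsum (Finset.range N)
      (fun k _ => (P_pos hw hl1pos.le k).le) hs1)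
  have hF1pos : 0 < ∑' k, P w l1 k := by linarith
  set F1 := ∑' k, P w l1 k with hF1def
  set B := (1 + l1) * F1 with hBdef
  have hBl1 : l1 < B := by nlinarith
  have hBpos : 0 < B := lt_trans hl1pos hBl1
  have hsB : Summable (P w B) := Hsum B (lt_trans hl1c hBl1)
  have hFB : ∑' k, P w B k < 1 := by
    have hle : ∑' k, P w B k ≤ (1 + l1) / (1 + B) * F1 := by
      calc ∑' k, P w B k ≤ ∑' k, (1 + l1) / (1 + B) * P w l1 k :=
            Summable.tsum_le_tsum (fun k => P_ratio hw hw0 hl1pos hBl1.le k) hsB (hs1.mul_left _)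
        _ = (1 + l1) / (1 + B) * F1 := tsum_mul_left
    have heq : (1 + l1) / (1 + B) * F1 = B / (1 + B) := by
      rw [hBdef]; ring
    have hlt : B / (1 + B) < 1 := by
      rw [div_lt_one (by linarith)]
      linarith
    rw [heq] at hle
    exact lt_of_le_of_lt hle hlt
  -- continuity of the tsum on Icc l1 B
  have hCF : ContinuousOn (fun lam => ∑' k, P w lam k) (Set.Icc l1 B) := by
    apply TendstoUniformlyOn.continuousOn
      (tendstoUniformlyOn_tsum hs1 (fun k x hx => ?_))
    · refine Filter.Frequently.of_forall fun t => ?_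
      exact continuousOn_finset_sum _ (fun k _ => P_contOn hw k
        (fun x hx => le_of_lt (lt_of_lt_of_le hl1pos hx.1)))
    · rw [Real.norm_eq_abs, abs_of_nonneg (P_pos hw (by linarith [hx.1]) k).le]
      exact P_anti hw hl1pos.le hx.1 k
  have hmem : (1:ℝ) ∈ Set.Icc (∑' k, P w B k) (∑' k, P w l1 k) := ⟨hFB.le, hF1.le⟩
  obtain ⟨lam, hlamIcc, hlameq⟩ := intermediate_value_Icc' hBl1.le hCF hmem
  exact ⟨lam, lt_of_lt_of_le hl1c hlamIcc.1, hlameq⟩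

section CaseA

variable (hw : ∀ k, 0 < w k) {v : ℕ → ℝ} (hv : ∀ k, w k = (k : ℝ) + v k)
  (ho : v =o[atTop] (fun k : ℕ => (k : ℝ)))
  (hs : Summable (fun k : ℕ => v k / (k : ℝ) ^ 2))

include hw hv ho

lemma caseA_w_lb : ∀ᶠ j : ℕ in atTop, (j : ℝ) / 2 ≤ w j := by
  filter_upwards [ho.def (by norm_num : (0:ℝ) < 1/2), eventually_ge_atTop 1] with j hj hj1
  have hj1' : (1:ℝ) ≤ (j:ℝ) := by exact_mod_cast hj1
  rw [Real.norm_eq_abs, Real.norm_eq_abs, abs_of_nonneg (by linarith : (0:ℝ) ≤ (j:ℝ))] at hj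
  have := (abs_le.1 hj).1
  rw [hv j]
  linarith

include hs

lemma caseA_summable_d :
    Summable (fun j : ℕ => |1 / w j - 1 / ((j : ℝ) + 1)|) := by
  apply summable_of_eventually_le (fun j => abs_nonneg _)
    (g := fun j => 2 / (j : ℝ) ^ 2 + 2 * |v j / (j : ℝ) ^ 2|)
  · filter_upwards [caseA_w_lb hw hv ho, eventually_ge_atTop 1] with j hwj hj1
    have hj1' : (1:ℝ) ≤ (j:ℝ) := by exact_mod_cast hj1
    have hjpos : (0:ℝ) < (j:ℝ) := by linarith
    have hwpos := hw j
    have hde : 1 / w j - 1 / ((j : ℝ) + 1) = (1 - v j) / (w j * ((j : ℝ) + 1)) := by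
      rw [div_sub_div _ _ (ne_of_gt hwpos) (by positivity)]
      rw [hv j]
      ring_nf
    rw [hde, abs_div, abs_of_nonneg (by positivity : (0:ℝ) ≤ w j * ((j:ℝ) + 1))]
    have h1 : |1 - v j| ≤ 1 + |v j| := by
      calc |1 - v j| ≤ |1| + |v j| := abs_sub _ _
        _ = 1 + |v j| := by rw [abs_one]
    have h2 : (j : ℝ) ^ 2 / 2 ≤ w j * ((j : ℝ) + 1) := by
      nlinarith
    calc |1 - v j| / (w j * ((j : ℝ) + 1)) ≤ (1 + |v j|) / ((j : ℝ) ^ 2 / 2) := by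
          apply div_le_div₀ (by positivity) h1 (by positivity) h2
      _ = 2 / (j : ℝ) ^ 2 + 2 * (|v j| / (j : ℝ) ^ 2) := by
          field_simp
      _ = 2 / (j : ℝ) ^ 2 + 2 * |v j / (j : ℝ) ^ 2| := by
          rw [abs_div, abs_of_nonneg (by positivity : (0:ℝ) ≤ (j:ℝ) ^ 2)]
  · apply Summable.add
    · simpa [div_eq_mul_inv] using (Real.summable_one_div_nat_pow.mpr one_lt_two).mul_left 2
    · exact (summable_abs_iff.mpr hs).mul_left 2

lemma caseA_bounds :
    ∃ D : ℝ, 0 ≤ D ∧ ∀ k : ℕ,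
      Real.log ((k : ℝ) + 2) - D ≤ ∑ j ∈ Finset.range (k + 1), 1 / w j ∧
      ∑ j ∈ Finset.range (k + 1), 1 / w j ≤ Real.log ((k : ℝ) + 1) + 1 + D := by
  have hd := caseA_summable_d hw hv ho hs
  refine ⟨∑' j, |1 / w j - 1 / ((j : ℝ) + 1)|, tsum_nonneg (fun j => abs_nonneg _), ?_⟩
  intro k
  have hb : |∑ j ∈ Finset.range (k + 1), (1 / w j - 1 / ((j : ℝ) + 1))|
      ≤ ∑' j, |1 / w j - 1 / ((j : ℝ) + 1)| := by
    calc |∑ j ∈ Finset.range (k + 1), (1 / w j - 1 / ((j : ℝ) + 1))|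
        ≤ ∑ j ∈ Finset.range (k + 1), |1 / w j - 1 / ((j : ℝ) + 1)| :=
          Finset.abs_sum_le_sum_abs _ _
      _ ≤ ∑' j, |1 / w j - 1 / ((j : ℝ) + 1)| :=
          Summable.sum_le_tsum _ (fun j _ => abs_nonneg _) hd
  rw [Finset.sum_sub_distrib] at hb
  have hb' := abs_le.1 hb
  have hlow : Real.log ((k : ℝ) + 2) ≤ ∑ j ∈ Finset.range (k + 1), 1 / ((j : ℝ) + 1) := by
    have := log_le_sum_harmonic (k + 1)
    push_cast at this ⊢
    rw [show ((k:ℝ) + 1 + 1) = (k:ℝ) + 2 by ring] at this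
    linarith
  have hup := sum_harmonic_le_log k
  constructor
  · linarith [hb'.1]
  · linarith [hb'.2]

lemma caseA_sq_bound :
    ∃ C2 : ℝ, 0 ≤ C2 ∧ ∀ k : ℕ, ∑ j ∈ Finset.range (k + 1), 1 / w j ^ 2 ≤ C2 := by
  have hsum : Summable (fun j : ℕ => 1 / w j ^ 2) := by
    apply summable_of_eventually_le (fun j => by positivity)
      (g := fun j => 4 / (j : ℝ) ^ 2)
    · filter_upwards [caseA_w_lb hw hv ho, eventually_ge_atTop 1] with j hwj hj1
      have hj1' : (1:ℝ) ≤ (j:ℝ) := by exact_mod_cast hj1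
      have hwpos := hw j
      rw [div_le_div_iff₀ (by positivity) (by positivity)]
      nlinarith
    · simpa [div_eq_mul_inv] using (Real.summable_one_div_nat_pow.mpr one_lt_two).mul_left 4
  exact ⟨∑' j, 1 / w j ^ 2, tsum_nonneg (fun j => by positivity),
    fun k => Summable.sum_le_tsum _ (fun j _ => by positivity) hsum⟩

lemma caseA_summable {lam : ℝ} (hlam : 1 < lam) : Summable (P w lam) := by
  obtain ⟨D, hD0, hD⟩ := caseA_bounds hw hv ho hs
  obtain ⟨C2, hC20, hC2⟩ := caseA_sq_bound hw hv ho hs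
  have hlam0 : (0:ℝ) < lam := by linarith
  set K := Real.exp (lam ^ 2 * C2 + lam * D) with hK
  have hbound : ∀ k : ℕ, P w lam k ≤ K * ((k : ℝ) + 2) ^ (-lam) := by
    intro k
    have h1 := P_le_exp' hw hlam0.le k
    have h2 := (hD k).1
    have h3 := hC2 k
    have h4 : lam ^ 2 * ∑ j ∈ Finset.range (k + 1), 1 / w j ^ 2
        - lam * ∑ j ∈ Finset.range (k + 1), 1 / w j
        ≤ lam ^ 2 * C2 + lam * D - lam * Real.log ((k : ℝ) + 2) := by
      have e1 : lam ^ 2 * ∑ j ∈ Finset.range (k + 1), 1 / w j ^ 2 ≤ lam ^ 2 * C2 := by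
        apply mul_le_mul_of_nonneg_left h3 (by positivity)
      have e2 : lam * (Real.log ((k : ℝ) + 2) - D) ≤
          lam * ∑ j ∈ Finset.range (k + 1), 1 / w j :=
        mul_le_mul_of_nonneg_left h2 hlam0.le
      nlinarith
    have h5 : Real.exp (lam ^ 2 * C2 + lam * D - lam * Real.log ((k : ℝ) + 2))
        = K * ((k : ℝ) + 2) ^ (-lam) := by
      rw [Real.rpow_def_of_pos (by positivity), sub_eq_add_neg, Real.exp_add, hK]
      congr 1
      · rw [← neg_mul, mul_comm]
    calc P w lam k ≤ Real.exp (lam ^ 2 * ∑ j ∈ Finset.range (k + 1), 1 / w j ^ 2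
          - lam * ∑ j ∈ Finset.range (k + 1), 1 / w j) := h1
      _ ≤ Real.exp (lam ^ 2 * C2 + lam * D - lam * Real.log ((k : ℝ) + 2)) :=
          Real.exp_le_exp.mpr h4
      _ = K * ((k : ℝ) + 2) ^ (-lam) := h5
  have hsummable : Summable (fun k : ℕ => K * ((k : ℝ) + 2) ^ (-lam)) := by
    apply Summable.mul_left
    have h0 : Summable (fun n : ℕ => (n : ℝ) ^ (-lam)) :=
      Real.summable_nat_rpow.mpr (by linarith)
    have h2 := (summable_nat_add_iff 2).mpr h0
    apply h2.congr
    intro n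
    push_cast
    ring_nf
  exact Summable.of_nonneg_of_le (fun k => (P_pos hw hlam0.le k).le) hbound hsummable

lemma caseA_not_summable : ¬ Summable (P w 1) := by
  obtain ⟨D, hD0, hD⟩ := caseA_bounds hw hv ho hs
  have hbound : ∀ k : ℕ, Real.exp (-(1 + D)) * ((k : ℝ) + 1)⁻¹ ≤ P w 1 k := by
    intro k
    have h1 := exp_le_P hw zero_le_one k
    have h2 := (hD k).2
    have h3 : Real.exp (-(1 + D)) * ((k : ℝ) + 1)⁻¹
        = Real.exp (-(1 + D) - Real.log ((k : ℝ) + 1)) := by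
      rw [Real.exp_sub, Real.exp_log (by positivity), div_eq_mul_inv]
    have h4 : -(1 + D) - Real.log ((k : ℝ) + 1)
        ≤ -∑ j ∈ Finset.range (k + 1), (1:ℝ) / w j := by
      linarith
    calc Real.exp (-(1 + D)) * ((k : ℝ) + 1)⁻¹
        = Real.exp (-(1 + D) - Real.log ((k : ℝ) + 1)) := h3
      _ ≤ Real.exp (-∑ j ∈ Finset.range (k + 1), (1:ℝ) / w j) := Real.exp_le_exp.mpr h4
      _ ≤ P w 1 k := h1
  intro hS
  have hsum2 : Summable (fun k : ℕ => Real.exp (-(1 + D)) * ((k : ℝ) + 1)⁻¹) :=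
    Summable.of_nonneg_of_le (fun k => by positivity) hbound hS
  have hsum3 : Summable (fun k : ℕ => ((k : ℝ) + 1)⁻¹) := by
    have h := hsum2.mul_left (Real.exp (-(1 + D)))⁻¹
    apply h.congr
    intro n
    rw [← mul_assoc, inv_mul_cancel₀ (Real.exp_ne_zero _), one_mul]
  have hsum4 : Summable (fun n : ℕ => ((n : ℕ) : ℝ)⁻¹) := by
    apply (summable_nat_add_iff 1).mp
    apply hsum3.congr
    intro n
    push_cast
    ring_nf
  exact Real.not_summable_natCast_inv hsum4

end CaseA

section CaseB

variable (hw : ∀ k, 0 < w k) {α : ℝ} {v : ℕ → ℝ}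

include hw

lemma caseB_not_summable : ¬ Summable (P w 0) := by
  have hone : ∀ k, P w 0 k = 1 := by
    intro k
    apply Finset.prod_eq_one
    intro j _
    rw [zero_add, div_self (hw j).ne']
  intro hS
  have h0 := hS.tendsto_atTop_zero
  have h1 : Tendsto (fun _ : ℕ => (1:ℝ)) atTop (nhds 0) :=
    h0.congr (fun k => hone k)
  have h2 := tendsto_nhds_unique h1 tendsto_const_nhds
  norm_num at h2

lemma caseB_summable (hα0 : 0 < α) (hα1 : α < 1)
    (hv : ∀ k, w k = (k : ℝ) ^ α + v k)
    (ho : v =o[atTop] (fun k : ℕ => (k : ℝ) ^ α))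
    {lam : ℝ} (hlam : 0 < lam) : Summable (P w lam) := by
  have htd : Tendsto (fun j : ℕ => (j : ℝ) ^ α) atTop atTop :=
    (tendsto_rpow_atTop hα0).comp tendsto_natCast_atTop_atTop
  have hkey : ∀ᶠ j : ℕ in atTop,
      lam / 3 * ((j : ℝ) ^ α)⁻¹ ≤ lam / (lam + w j) := by
    filter_upwards [ho.def (by norm_num : (0:ℝ) < 1/2), htd.eventually_ge_atTop lam]
      with j hj hjl
    have hra : (0:ℝ) ≤ (j : ℝ) ^ α := Real.rpow_nonneg (Nat.cast_nonneg j) α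
    rw [Real.norm_eq_abs, Real.norm_eq_abs, abs_of_nonneg hra] at hj
    have hv1 := (abs_le.1 hj).2
    have hwle : w j ≤ 2 * (j : ℝ) ^ α := by rw [hv j]; linarith
    have hrapos : (0:ℝ) < (j : ℝ) ^ α := lt_of_lt_of_le hlam hjl
    have hd : lam + w j ≤ 3 * (j : ℝ) ^ α := by linarith
    have hdpos : (0:ℝ) < lam + w j := by linarith [hw j]
    have e : lam / 3 * ((j : ℝ) ^ α)⁻¹ = lam / (3 * (j : ℝ) ^ α) := by
      field_simp
    rw [e, div_le_div_iff₀ (by positivity) hdpos]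
    nlinarith
  obtain ⟨N0, hN0⟩ := eventually_atTop.1 hkey
  set M := max N0 1 with hMdef
  have hMN : N0 ≤ M := le_max_left _ _
  have hM1 : 1 ≤ M := le_max_right _ _
  have hsum_lb : ∀ k : ℕ, M ≤ k →
      lam / 3 * ((k : ℝ) ^ (1 - α) - M) ≤ ∑ j ∈ Finset.range (k + 1), lam / (lam + w j) := by
    intro k hMk
    have h1k : 1 ≤ k := le_trans hM1 hMk
    have hkR : (1:ℝ) ≤ (k:ℝ) := by exact_mod_cast h1k
    have hkpos : (0:ℝ) < (k:ℝ) := by linarith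
    have hkapos : (0:ℝ) < (k:ℝ) ^ α := Real.rpow_pos_of_pos hkpos α
    have hka1 : (1:ℝ) ≤ (k:ℝ) ^ α := Real.one_le_rpow hkR hα0.le
    have hsub : Finset.Icc M k ⊆ Finset.range (k + 1) := by
      intro j hj
      rw [Finset.mem_range]
      exact Nat.lt_succ_of_le (Finset.mem_Icc.1 hj).2
    have h1 : ∑ j ∈ Finset.Icc M k, lam / (lam + w j)
        ≤ ∑ j ∈ Finset.range (k + 1), lam / (lam + w j) :=
      Finset.sum_le_sum_of_subset_of_nonneg hsub (fun j _ _ => by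
        have := hw j; positivity)
    have h2 : ∑ j ∈ Finset.Icc M k, lam / 3 * ((k : ℝ) ^ α)⁻¹
        ≤ ∑ j ∈ Finset.Icc M k, lam / (lam + w j) := by
      apply Finset.sum_le_sum
      intro j hj
      obtain ⟨hMj, hjk⟩ := Finset.mem_Icc.1 hj
      have hj1 : 1 ≤ j := le_trans hM1 hMj
      have hjR : (1:ℝ) ≤ (j:ℝ) := by exact_mod_cast hj1
      have hjapos : (0:ℝ) < (j:ℝ) ^ α := Real.rpow_pos_of_pos (by linarith) α
      have hja : (j:ℝ) ^ α ≤ (k:ℝ) ^ α :=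
        Real.rpow_le_rpow (by linarith) (by exact_mod_cast hjk) hα0.le
      calc lam / 3 * ((k : ℝ) ^ α)⁻¹ ≤ lam / 3 * ((j : ℝ) ^ α)⁻¹ := by
            gcongr
        _ ≤ lam / (lam + w j) := hN0 j (le_trans hMN hMj)
    have h3 : ∑ j ∈ Finset.Icc M k, lam / 3 * ((k : ℝ) ^ α)⁻¹
        = ((k + 1 - M : ℕ) : ℝ) * (lam / 3 * ((k : ℝ) ^ α)⁻¹) := by
      rw [Finset.sum_const, Nat.card_Icc, nsmul_eq_mul]
    have hcard : ((k + 1 - M : ℕ) : ℝ) = (k : ℝ) + 1 - M := by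
      have hle : M ≤ k + 1 := le_trans hMk (Nat.le_succ k)
      push_cast [hle]
      ring
    have hk1a : (k:ℝ) ^ (1 - α) = (k:ℝ) * ((k:ℝ) ^ α)⁻¹ := by
      rw [Real.rpow_sub hkpos, Real.rpow_one, div_eq_mul_inv]
    have hinvle : ((k:ℝ) ^ α)⁻¹ ≤ 1 := inv_le_one_of_one_le₀ hka1
    have hMR : (1:ℝ) ≤ (M:ℝ) := by exact_mod_cast hM1
    have hfinal : lam / 3 * ((k : ℝ) ^ (1 - α) - M)
        ≤ ((k : ℝ) + 1 - M) * (lam / 3 * ((k : ℝ) ^ α)⁻¹) := by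
      rw [hk1a]
      have hMk' : (M:ℝ) ≤ (k:ℝ) := by exact_mod_cast hMk
      have hint : (0:ℝ) ≤ (1 - ((k:ℝ) ^ α)⁻¹) * ((M:ℝ) - 1) :=
        mul_nonneg (sub_nonneg.2 hinvle) (sub_nonneg.2 hMR)
      nlinarith [mul_nonneg (by positivity : (0:ℝ) ≤ lam / 3) hint]
    calc lam / 3 * ((k : ℝ) ^ (1 - α) - M)
        ≤ ((k + 1 - M : ℕ) : ℝ) * (lam / 3 * ((k : ℝ) ^ α)⁻¹) := by rw [hcard]; exact hfinal
      _ = ∑ j ∈ Finset.Icc M k, lam / 3 * ((k : ℝ) ^ α)⁻¹ := h3.symm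
      _ ≤ ∑ j ∈ Finset.Icc M k, lam / (lam + w j) := h2
      _ ≤ ∑ j ∈ Finset.range (k + 1), lam / (lam + w j) := h1
  have hlog : ∀ᶠ x : ℝ in atTop,
      2 * Real.log x + lam / 3 * M ≤ lam / 3 * x ^ (1 - α) := by
    have h1 := (isLittleO_log_rpow_atTop (by linarith : (0:ℝ) < 1 - α)).def
      (show (0:ℝ) < lam / 12 by positivity)
    have h2 : Tendsto (fun x : ℝ => x ^ (1 - α)) atTop atTop :=
      tendsto_rpow_atTop (by linarith)
    filter_upwards [h1, h2.eventually_ge_atTop (2 * M), eventually_ge_atTop (1:ℝ)]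
      with x hx1 hx2 hx3
    have hxa : (0:ℝ) ≤ x ^ (1 - α) := Real.rpow_nonneg (by linarith) _
    rw [Real.norm_eq_abs, Real.norm_eq_abs, abs_of_nonneg hxa,
      abs_of_nonneg (Real.log_nonneg hx3)] at hx1
    nlinarith
  have hlogN : ∀ᶠ k : ℕ in atTop,
      2 * Real.log (k:ℝ) + lam / 3 * M ≤ lam / 3 * (k:ℝ) ^ (1 - α) :=
    tendsto_natCast_atTop_atTop.eventually hlog
  have hfin : ∀ᶠ k : ℕ in atTop, P w lam k ≤ (k:ℝ) ^ (-2 : ℝ) := by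
    filter_upwards [hlogN, eventually_ge_atTop M] with k hk1 hk2
    have h1k : 1 ≤ k := le_trans hM1 hk2
    have hkR : (1:ℝ) ≤ (k:ℝ) := by exact_mod_cast h1k
    have hkpos : (0:ℝ) < (k:ℝ) := by linarith
    calc P w lam k ≤ Real.exp (-∑ j ∈ Finset.range (k + 1), lam / (lam + w j)) :=
          P_le_exp hw hlam.le k
      _ ≤ Real.exp (-(lam / 3 * ((k:ℝ) ^ (1 - α) - M))) :=
          Real.exp_le_exp.mpr (by linarith [hsum_lb k hk2])
      _ ≤ Real.exp (-(2 * Real.log (k:ℝ))) :=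
          Real.exp_le_exp.mpr (by nlinarith)
      _ = (k:ℝ) ^ (-2 : ℝ) := by
          rw [Real.rpow_def_of_pos hkpos]
          congr 1
          ring
  exact summable_of_eventually_le (fun k => (P_pos hw hlam.le k).le) hfin
    (Real.summable_nat_rpow.mpr (by norm_num))

end CaseB

end Statement4Aux


/-- Under hypothesis (a) `w k = k + v k`, `v = o(k)`, `∑ v k / k²` convergent,
or (b) `w k = k^α + v k`, `0 < α < 1`, `v = o(k^α)`, there is a unique `λ* > 0` with
`∑_{k=1}^∞ ∏_{j=0}^{k-1} w j / (λ* + w j) = 1`; moreover in case (a) one has `λ* > 1`. -/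
theorem statement4
    (w : ℕ → ℝ) (hw : ∀ k, 0 < w k) (hw0 : w 0 = 1)
    (hab :
      (∃ v : ℕ → ℝ, (∀ k, w k = (k : ℝ) + v k) ∧
        v =o[atTop] (fun k : ℕ => (k : ℝ)) ∧
        Summable (fun k : ℕ => v k / (k : ℝ) ^ 2)) ∨
      (∃ α : ℝ, ∃ v : ℕ → ℝ, 0 < α ∧ α < 1 ∧
        (∀ k, w k = (k : ℝ) ^ α + v k) ∧
        v =o[atTop] (fun k : ℕ => (k : ℝ) ^ α))) :
    (∃! lam : ℝ, 0 < lam ∧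
        ∑' k : ℕ, ∏ j ∈ Finset.range (k + 1), w j / (lam + w j) = 1) ∧
    ((∃ v : ℕ → ℝ, (∀ k, w k = (k : ℝ) + v k) ∧
        v =o[atTop] (fun k : ℕ => (k : ℝ)) ∧
        Summable (fun k : ℕ => v k / (k : ℝ) ^ 2)) →
      ∀ lam : ℝ, 0 < lam →
        ∑' k : ℕ, ∏ j ∈ Finset.range (k + 1), w j / (lam + w j) = 1 → 1 < lam) := by
  simp only [Statement4Aux.P_def]
  have part2 : (∃ v : ℕ → ℝ, (∀ k, w k = (k : ℝ) + v k) ∧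
      v =o[atTop] (fun k : ℕ => (k : ℝ)) ∧
      Summable (fun k : ℕ => v k / (k : ℝ) ^ 2)) →
      ∀ lam : ℝ, 0 < lam → ∑' k, Statement4Aux.P w lam k = 1 → 1 < lam := by
    rintro ⟨v, hv, ho, hs⟩ lam h0 h1
    exact Statement4Aux.lam_gt hw zero_le_one
      (Statement4Aux.caseA_not_summable hw hv ho hs) h0 h1
  refine ⟨?_, part2⟩
  rcases hab with ⟨v, hv, ho, hs⟩ | ⟨α, v, hα0, hα1, hv, ho⟩
  · obtain ⟨lam, hgt, heq⟩ := Statement4Aux.master hw hw0 zero_le_one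
      (fun l hl => Statement4Aux.caseA_summable hw hv ho hs hl)
      (Statement4Aux.caseA_not_summable hw hv ho hs)
    exact ⟨lam, ⟨by linarith, heq⟩, fun y hy =>
      Statement4Aux.lam_unique hw hy.1 (by linarith) hy.2 heq⟩
  · obtain ⟨lam, hgt, heq⟩ := Statement4Aux.master hw hw0 le_rfl
      (fun l hl => Statement4Aux.caseB_summable hw hα0 hα1 hv ho hl)
      (Statement4Aux.caseB_not_summable hw)
    exact ⟨lam, ⟨hgt, heq⟩, fun y hy =>
      Statement4Aux.lam_unique hw hy.1 hgt hy.2 heq⟩
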